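/- arXiv:2504.20795 — 4 statements merged into one kernel-verified Lean document; each statement's English description precedes it below -/
import Mathlib

section
/- Let G = (V, E, p) be an uncertain graph, k an integer, η a real number, and u a vertex. If u belongs to a vertex set C ⊆ V satisfying the (k+1, η)-constraint, then the k-probability of u in the whole graph satisfies k-prob(u, V) ≥ η. (Paper's Corollary 1: k-prob(u, G) ≥ η-thres_{k+1}(u).) -/
open Finset

/-- The `k`-probability of a vertex `u` in the subgraph of `G` induced by the vertex set
`C`: the probability that `u` has at least `k` neighbors within `C`, where each edge
`uv` exists independently with probability `p u v`. -/
noncomputable def kProb {V : Type*} [Fintype V] [DecidableEq V] (G : SimpleGraph V)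
    [DecidableRel G.Adj] (p : V → V → ℝ) (k : ℕ) (C : Finset V) (u : V) : ℝ :=
  ∑ T ∈ ((C.filter (fun v => G.Adj u v)).powerset).filter (fun T => k ≤ T.card),
    (∏ v ∈ T, p u v) * ∏ v ∈ (C.filter (fun v => G.Adj u v)) \ T, (1 - p u v)

namespace KProbAux

variable {V : Type*} [DecidableEq V]

/-- Probability that at least `k` of the independent events indexed by `N`
(with probabilities `w v`) occur. -/
noncomputable def F (w : V → ℝ) (k : ℕ) (N : Finset V) : ℝ :=
  ∑ T ∈ N.powerset.filter (fun T => k ≤ T.card),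
    (∏ v ∈ T, w v) * ∏ v ∈ N \ T, (1 - w v)

lemma term_nonneg {w : V → ℝ} {N T : Finset V} (hw : ∀ v ∈ N, 0 ≤ w v ∧ w v ≤ 1)
    (hT : T ⊆ N) : 0 ≤ (∏ v ∈ T, w v) * ∏ v ∈ N \ T, (1 - w v) := by
  apply mul_nonneg
  · exact Finset.prod_nonneg fun v hv => (hw v (hT hv)).1
  · exact Finset.prod_nonneg fun v hv => by
      have := (hw v (Finset.mem_sdiff.mp hv).1).2; linarith

lemma F_anti {w : V → ℝ} {N : Finset V} (hw : ∀ v ∈ N, 0 ≤ w v ∧ w v ≤ 1)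
    {j k : ℕ} (hjk : j ≤ k) : F w k N ≤ F w j N := by
  apply Finset.sum_le_sum_of_subset_of_nonneg
  · intro T hT
    rw [Finset.mem_filter] at hT ⊢
    exact ⟨hT.1, le_trans hjk hT.2⟩
  · intro T hT _
    exact term_nonneg hw (Finset.mem_powerset.mp (Finset.mem_filter.mp hT).1)

lemma F_insert (w : V → ℝ) {N : Finset V} {a : V} (ha : a ∉ N) (k : ℕ) :
    F w k (insert a N) = (1 - w a) * F w k N + w a * F w (k - 1) N := by
  unfold F
  rw [Finset.sum_filter, Finset.sum_filter, Finset.sum_filter,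
      Finset.sum_powerset_insert ha, Finset.mul_sum, Finset.mul_sum,
      ← Finset.sum_add_distrib, ← Finset.sum_add_distrib]
  apply Finset.sum_congr rfl
  intro T hT
  have hTN : T ⊆ N := Finset.mem_powerset.mp hT
  have haT : a ∉ T := fun h => ha (hTN h)
  have h3 : a ∉ N \ T := fun h => ha (Finset.mem_sdiff.mp h).1
  have h1 : insert a N \ T = insert a (N \ T) := by
    ext v
    simp only [Finset.mem_sdiff, Finset.mem_insert]
    constructor
    · rintro ⟨h | h, h'⟩
      exacts [Or.inl h, Or.inr ⟨h, h'⟩]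
    · rintro (rfl | ⟨h, h'⟩)
      exacts [⟨Or.inl rfl, haT⟩, ⟨Or.inr h, h'⟩]
  have h2 : insert a N \ insert a T = N \ T := by
    ext v
    simp only [Finset.mem_sdiff, Finset.mem_insert, not_or]
    constructor
    · rintro ⟨h | h, h', h''⟩
      · exact absurd h h'
      · exact ⟨h, h''⟩
    · rintro ⟨h, h'⟩
      exact ⟨Or.inr h, fun hv => ha (hv ▸ h), h'⟩
  rw [Finset.card_insert_of_notMem haT, h1, h2,
      Finset.prod_insert h3, Finset.prod_insert haT]
  by_cases hk1 : k ≤ T.card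
  · have hk2 : k ≤ T.card + 1 := by omega
    have hk3 : k - 1 ≤ T.card := by omega
    simp only [if_pos hk1, if_pos hk2, if_pos hk3]; ring
  · by_cases hk2 : k ≤ T.card + 1
    · have hk3 : k - 1 ≤ T.card := by omega
      simp only [if_neg hk1, if_pos hk2, if_pos hk3]; ring
    · have hk3 : ¬ (k - 1 ≤ T.card) := by omega
      simp only [if_neg hk1, if_neg hk2, if_neg hk3]; ring

lemma le_F_insert {w : V → ℝ} {N : Finset V} {a : V} (ha : a ∉ N)
    (hw : ∀ v ∈ insert a N, 0 ≤ w v ∧ w v ≤ 1) (k : ℕ) :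
    F w k N ≤ F w k (insert a N) := by
  rw [F_insert w ha k]
  have hwN : ∀ v ∈ N, 0 ≤ w v ∧ w v ≤ 1 := fun v hv => hw v (Finset.mem_insert_of_mem hv)
  have h1 : F w k N ≤ F w (k - 1) N := F_anti hwN (Nat.sub_le k 1)
  have ha0 := (hw a (Finset.mem_insert_self a N)).1
  have ha1 := (hw a (Finset.mem_insert_self a N)).2
  nlinarith

lemma F_mono_union {w : V → ℝ} {N : Finset V} (s : Finset V)
    (hw : ∀ v ∈ N ∪ s, 0 ≤ w v ∧ w v ≤ 1) (k : ℕ) :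
    F w k N ≤ F w k (N ∪ s) := by
  classical
  induction s using Finset.induction_on with
  | empty => simp
  | @insert a s ha ih =>
    have hsub : N ∪ s ⊆ N ∪ insert a s := by
      intro v hv; rcases Finset.mem_union.mp hv with h | h
      · exact Finset.mem_union_left _ h
      · exact Finset.mem_union_right _ (Finset.mem_insert_of_mem h)
    have hw' : ∀ v ∈ N ∪ s, 0 ≤ w v ∧ w v ≤ 1 := fun v hv => hw v (hsub hv)
    have step := ih hw'
    by_cases haNs : a ∈ N ∪ s
    · have : N ∪ insert a s = N ∪ s := by
        ext v
        simp only [Finset.mem_union, Finset.mem_insert]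
        constructor
        · rintro (h | h | h)
          · exact Or.inl h
          · exact h ▸ (Finset.mem_union.mp haNs)
          · exact Or.inr h
        · rintro (h | h)
          · exact Or.inl h
          · exact Or.inr (Or.inr h)
      rw [this]; exact step
    · have heq : N ∪ insert a s = insert a (N ∪ s) := by
        ext v; simp only [Finset.mem_union, Finset.mem_insert]; tauto
      rw [heq]
      refine step.trans (le_F_insert haNs ?_ k)
      intro v hv
      exact hw v (by rw [heq]; exact hv)

lemma F_mono {w : V → ℝ} {N M : Finset V} (hNM : N ⊆ M)
    (hw : ∀ v ∈ M, 0 ≤ w v ∧ w v ≤ 1) (k : ℕ) : F w k N ≤ F w k M := by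
  have h : M = N ∪ (M \ N) := by
    rw [Finset.union_sdiff_of_subset hNM]
  rw [h]
  apply F_mono_union
  rw [← h]
  exact hw

end KProbAux

lemma kProb_eq_F {V : Type*} [Fintype V] [DecidableEq V] (G : SimpleGraph V)
    [DecidableRel G.Adj] (p : V → V → ℝ) (k : ℕ) (C : Finset V) (u : V) :
    kProb G p k C u = KProbAux.F (p u) k (C.filter (fun v => G.Adj u v)) := rfl

/-- Paper's Corollary 1: if `u` belongs to a vertex set `C` satisfying the
`(k+1, η)`-constraint, then the `k`-probability of `u` in the whole graph is at
least `η`, i.e. `k-prob(u, G) ≥ η-thres_{k+1}(u)`. -/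
theorem kProb_whole_ge_of_succ_constraint {V : Type*} [Fintype V] [DecidableEq V]
    (G : SimpleGraph V) [DecidableRel G.Adj] (p : V → V → ℝ)
    (hsymm : ∀ u v, p u v = p v u) (hp : ∀ u v, G.Adj u v → 0 ≤ p u v ∧ p u v ≤ 1)
    (k : ℕ) (η : ℝ) (u : V) (C : Finset V) (hu : u ∈ C)
    (hC : ∀ v ∈ C, η ≤ kProb G p (k + 1) C v) :
    η ≤ kProb G p k Finset.univ u := by
  have hwB : ∀ v ∈ Finset.univ.filter (fun v => G.Adj u v), 0 ≤ p u v ∧ p u v ≤ 1 := by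
    intro v hv
    exact hp u v (Finset.mem_filter.mp hv).2
  have hwA : ∀ v ∈ C.filter (fun v => G.Adj u v), 0 ≤ p u v ∧ p u v ≤ 1 := by
    intro v hv
    exact hp u v (Finset.mem_filter.mp hv).2
  have hsub : C.filter (fun v => G.Adj u v) ⊆ Finset.univ.filter (fun v => G.Adj u v) := by
    intro v hv
    exact Finset.mem_filter.mpr ⟨Finset.mem_univ v, (Finset.mem_filter.mp hv).2⟩
  calc η ≤ kProb G p (k + 1) C u := hC u hu
    _ = KProbAux.F (p u) (k + 1) (C.filter (fun v => G.Adj u v)) := rfl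
    _ ≤ KProbAux.F (p u) k (C.filter (fun v => G.Adj u v)) :=
        KProbAux.F_anti hwA (Nat.le_succ k)
    _ ≤ KProbAux.F (p u) k (Finset.univ.filter (fun v => G.Adj u v)) :=
        KProbAux.F_mono hsub hwB k
    _ = kProb G p k Finset.univ u := rfl
end

section
/- Let I be a finite index set, p : I → ℝ with 0 ≤ p(i) ≤ 1 for all i, and let e ∈ I with p(e) < 1. Then for every integer i ≥ 1, P_{I\{e}}(count = i) = (P_I(count = i) − p(e) · P_{I\{e}}(count = i − 1)) / (1 − p(e)), and P_{I\{e}}(count = 0) = P_I(count = 0) / (1 − p(e)). (The division-based edge-deletion update formula, Equation (6) in the paper.) -/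
open Finset

/-- Possible-world weight: the probability that exactly the indices in `S` occur. -/
noncomputable def pbWeight {α : Type*} [DecidableEq α] (I : Finset α) (p : α → ℝ)
    (S : Finset α) : ℝ :=
  (∏ i ∈ S, p i) * ∏ i ∈ I \ S, (1 - p i)

/-- Poisson binomial point probability `P_I(count = i)`. -/
noncomputable def pbEq {α : Type*} [DecidableEq α] (I : Finset α) (p : α → ℝ)
    (i : ℕ) : ℝ :=
  ∑ S ∈ I.powerset.filter (fun S => S.card = i), pbWeight I p S

lemma pbEq_rec {α : Type*} [DecidableEq α] (I : Finset α) (p : α → ℝ)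
    (e : α) (he : e ∈ I) (n : ℕ) :
    pbEq I p n =
      (if 1 ≤ n then p e * pbEq (I.erase e) p (n - 1) else 0)
      + (1 - p e) * pbEq (I.erase e) p n := by
  classical
  set J := I.erase e with hJ
  have heJ : e ∉ J := notMem_erase e I
  rw [pbEq, ← Finset.sum_filter_add_sum_filter_not _ (fun S => e ∈ S)]
  congr 1
  · -- sets containing e
    rcases Nat.eq_zero_or_pos n with h0 | h1
    · subst h0
      rw [if_neg (by omega : ¬ (1:ℕ) ≤ 0)]
      rw [Finset.sum_eq_zero]
      intro S hS
      simp only [mem_filter, mem_powerset] at hS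
      exact absurd (Finset.card_eq_zero.mp hS.1.2 ▸ hS.2) (by simp)
    · rw [if_pos (by omega : 1 ≤ n)]
      rw [pbEq, Finset.mul_sum]
      refine Finset.sum_nbij' (fun S => S.erase e) (fun T => insert e T) ?_ ?_ ?_ ?_ ?_
      · intro S hS
        simp only [mem_filter, mem_powerset] at hS ⊢
        obtain ⟨⟨hsub, hcard⟩, heS⟩ := hS
        refine ⟨Finset.erase_subset_erase e hsub, ?_⟩
        rw [Finset.card_erase_of_mem heS, hcard]
      · intro T hT
        simp only [mem_filter, mem_powerset] at hT ⊢
        obtain ⟨hsub, hcard⟩ := hT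
        have heT : e ∉ T := fun h => heJ (hsub h)
        refine ⟨⟨?_, ?_⟩, Finset.mem_insert_self e T⟩
        · intro x hx
          rcases Finset.mem_insert.mp hx with rfl | hx
          · exact he
          · exact (Finset.erase_subset e I) (hsub hx)
        · rw [Finset.card_insert_of_notMem heT, hcard]
          omega
      · intro S hS
        simp only [mem_filter] at hS
        exact Finset.insert_erase hS.2
      · intro T hT
        simp only [mem_filter, mem_powerset] at hT
        exact Finset.erase_insert (fun h => heJ (hT.1 h))
      · intro S hS
        simp only [mem_filter, mem_powerset] at hS
        obtain ⟨⟨hsub, hcard⟩, heS⟩ := hS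
        rw [pbWeight, pbWeight]
        have h1 : ∏ i ∈ S, p i = p e * ∏ i ∈ S.erase e, p i :=
          (Finset.mul_prod_erase S p heS).symm
        have h2 : I \ S = J \ S.erase e := by
          ext x
          simp only [mem_sdiff, hJ, mem_erase]
          constructor
          · intro ⟨hxI, hxS⟩
            have : x ≠ e := fun h => hxS (h ▸ heS)
            exact ⟨⟨this, hxI⟩, fun hxe => hxS hxe.2⟩
          · intro ⟨⟨hne, hxI⟩, hxS⟩
            exact ⟨hxI, fun h => hxS ⟨hne, h⟩⟩
        rw [h1, h2]; ring
  · -- sets not containing e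
    rw [pbEq, Finset.mul_sum]
    refine Finset.sum_nbij' (fun S => S) (fun S => S) ?_ ?_ ?_ ?_ ?_
    · intro S hS
      simp only [mem_filter, mem_powerset] at hS ⊢
      exact ⟨Finset.subset_erase.mpr ⟨hS.1.1, hS.2⟩, hS.1.2⟩
    · intro S hS
      simp only [mem_filter, mem_powerset] at hS ⊢
      exact ⟨⟨hS.1.trans (Finset.erase_subset e I), hS.2⟩, fun h => heJ (hS.1 h)⟩
    · intro S _; rfl
    · intro S _; rfl
    · intro S hS
      simp only [mem_filter, mem_powerset] at hS
      obtain ⟨⟨hsub, hcard⟩, heS⟩ := hS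
      rw [pbWeight, pbWeight]
      have h2 : I \ S = insert e (J \ S) := by
        ext x
        simp only [mem_sdiff, mem_insert, hJ, mem_erase]
        constructor
        · intro ⟨hxI, hxS⟩
          by_cases hx : x = e
          · left; exact hx
          · right; exact ⟨⟨hx, hxI⟩, hxS⟩
        · rintro (rfl | ⟨⟨_, hxI⟩, hxS⟩)
          · exact ⟨he, heS⟩
          · exact ⟨hxI, hxS⟩
      have heJS : e ∉ J \ S := fun h => heJ (mem_sdiff.mp h).1
      rw [h2, Finset.prod_insert heJS]; ring

/-- The division-based edge-deletion update formula (Equation (6) of the paper). -/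
theorem pbEq_deletion_update {α : Type*} [DecidableEq α] (I : Finset α) (p : α → ℝ)
    (hp : ∀ i ∈ I, 0 ≤ p i ∧ p i ≤ 1) (e : α) (he : e ∈ I) (hpe : p e < 1) :
    (∀ i : ℕ, 1 ≤ i →
      pbEq (I.erase e) p i = (pbEq I p i - p e * pbEq (I.erase e) p (i - 1)) / (1 - p e)) ∧
    pbEq (I.erase e) p 0 = pbEq I p 0 / (1 - p e) := by
  have hne : (1 : ℝ) - p e ≠ 0 := by linarith
  constructor
  · intro i hi
    have := pbEq_rec I p e he i
    rw [if_pos hi] at this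
    field_simp
    linarith
  · have := pbEq_rec I p e he 0
    rw [if_neg (by norm_num)] at this
    field_simp
    linarith
end

section
/- Let I be a finite index set with |I| = d, and let p : I → ℝ with 0 ≤ p(i) ≤ 1 for all i. If q ∈ [0,1] satisfies q ≤ p(i) for every i ∈ I, then for every integer k with 0 ≤ k ≤ d, P_I(count ≥ k) ≥ Σ_{j=k}^{d} C(d, j) · q^j · (1 − q)^{d−j}, where C(d, j) is the binomial coefficient. (The lower bound of Equation (7): the binomial tail at the minimum incident edge probability lower-bounds the k-probability.) -/
open Finset

/-- Poisson binomial tail probability `P_I(count ≥ k)`. -/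
noncomputable def pbTail {α : Type*} [DecidableEq α] (I : Finset α) (p : α → ℝ)
    (k : ℕ) : ℝ :=
  ∑ S ∈ I.powerset.filter (fun S => k ≤ S.card), pbWeight I p S

lemma pbWeight_nonneg {α : Type*} [DecidableEq α] {I : Finset α} {p : α → ℝ}
    (hp : ∀ i ∈ I, 0 ≤ p i ∧ p i ≤ 1) {S : Finset α} (hS : S ⊆ I) :
    0 ≤ pbWeight I p S := by
  refine mul_nonneg (Finset.prod_nonneg fun i hi => (hp i (hS hi)).1)
    (Finset.prod_nonneg fun i hi => ?_)
  have := (hp i (Finset.mem_sdiff.mp hi).1).2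
  linarith

lemma pbWeight_insert_self {α : Type*} [DecidableEq α] {a : α} {I : Finset α} (ha : a ∉ I)
    (p : α → ℝ) {T : Finset α} (hT : T ⊆ I) :
    pbWeight (insert a I) p (insert a T) = p a * pbWeight I p T := by
  have haT : a ∉ T := fun h => ha (hT h)
  have hsd : insert a I \ insert a T = I \ T := by
    ext x
    simp only [Finset.mem_sdiff, Finset.mem_insert, not_or]
    constructor
    · rintro ⟨hx1 | hx1, hx2, hx3⟩
      · exact absurd hx1 hx2
      · exact ⟨hx1, hx3⟩
    · rintro ⟨hx1, hx3⟩
      exact ⟨Or.inr hx1, fun h => ha (h ▸ hx1), hx3⟩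
  unfold pbWeight
  rw [hsd, Finset.prod_insert haT]
  ring

lemma pbWeight_insert_not {α : Type*} [DecidableEq α] {a : α} {I : Finset α} (ha : a ∉ I)
    (p : α → ℝ) {T : Finset α} (hT : T ⊆ I) :
    pbWeight (insert a I) p T = (1 - p a) * pbWeight I p T := by
  have haT : a ∉ T := fun h => ha (hT h)
  have hsd : insert a I \ T = insert a (I \ T) := by
    ext x
    simp only [Finset.mem_sdiff, Finset.mem_insert]
    constructor
    · rintro ⟨hx1 | hx1, hx2⟩
      · exact Or.inl hx1
      · exact Or.inr ⟨hx1, hx2⟩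
    · rintro (rfl | ⟨hx1, hx2⟩)
      · exact ⟨Or.inl rfl, haT⟩
      · exact ⟨Or.inr hx1, hx2⟩
  have haId : a ∉ I \ T := fun h => ha (Finset.mem_sdiff.mp h).1
  unfold pbWeight
  rw [hsd, Finset.prod_insert haId]
  ring

lemma pbTail_insert {α : Type*} [DecidableEq α] {a : α} {I : Finset α} (ha : a ∉ I)
    (p : α → ℝ) (k : ℕ) :
    pbTail (insert a I) p k = p a * pbTail I p (k - 1) + (1 - p a) * pbTail I p k := by
  have key : ∀ m : ℕ, ∀ f : α → ℝ,
      pbTail (insert a I) f k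
        = (∑ T ∈ I.powerset, if k ≤ T.card then pbWeight (insert a I) f T else 0)
          + ∑ T ∈ I.powerset, if k ≤ T.card + 1 then pbWeight (insert a I) f (insert a T) else 0 := by
    intro m f
    unfold pbTail
    rw [Finset.sum_filter, Finset.powerset_insert, Finset.sum_union, Finset.sum_image]
    · congr 1
      apply Finset.sum_congr rfl
      intro T hT
      have hTI : T ⊆ I := Finset.mem_powerset.mp hT
      have haT : a ∉ T := fun h => ha (hTI h)
      rw [Finset.card_insert_of_notMem haT]
    · intro x hx y hy hxy
      have hax : a ∉ x := fun h => ha (Finset.mem_powerset.mp hx h)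
      have hay : a ∉ y := fun h => ha (Finset.mem_powerset.mp hy h)
      have : (insert a x).erase a = (insert a y).erase a := by rw [hxy]
      rwa [Finset.erase_insert hax, Finset.erase_insert hay] at this
    · rw [Finset.disjoint_left]
      intro S hS hS'
      obtain ⟨T, hT, rfl⟩ := Finset.mem_image.mp hS'
      exact ha (Finset.mem_powerset.mp hS (Finset.mem_insert_self a T))
  rw [key 0 p]
  have h1 : (∑ T ∈ I.powerset, if k ≤ T.card then pbWeight (insert a I) p T else 0)
      = (1 - p a) * pbTail I p k := by
    unfold pbTail
    rw [Finset.sum_filter, Finset.mul_sum]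
    apply Finset.sum_congr rfl
    intro T hT
    rw [pbWeight_insert_not ha p (Finset.mem_powerset.mp hT)]
    split <;> ring
  have h2 : (∑ T ∈ I.powerset, if k ≤ T.card + 1 then pbWeight (insert a I) p (insert a T) else 0)
      = p a * pbTail I p (k - 1) := by
    unfold pbTail
    rw [Finset.sum_filter, Finset.mul_sum]
    apply Finset.sum_congr rfl
    intro T hT
    rw [pbWeight_insert_self ha p (Finset.mem_powerset.mp hT)]
    have : (k ≤ T.card + 1) ↔ (k - 1 ≤ T.card) := by omega
    simp only [this]
    split <;> ring
  rw [h1, h2]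
  ring

lemma pbTail_anti {α : Type*} [DecidableEq α] {I : Finset α} {p : α → ℝ}
    (hp : ∀ i ∈ I, 0 ≤ p i ∧ p i ≤ 1) {k l : ℕ} (hkl : k ≤ l) :
    pbTail I p l ≤ pbTail I p k := by
  apply Finset.sum_le_sum_of_subset_of_nonneg
  · intro S hS
    simp only [Finset.mem_filter] at hS ⊢
    exact ⟨hS.1, le_trans hkl hS.2⟩
  · intro S hS _
    exact pbWeight_nonneg hp (Finset.mem_powerset.mp (Finset.mem_filter.mp hS).1)

lemma pbTail_mono {α : Type*} [DecidableEq α] (I : Finset α) (p p' : α → ℝ)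
    (hp'0 : ∀ i ∈ I, 0 ≤ p' i) (hle : ∀ i ∈ I, p' i ≤ p i) (hp1 : ∀ i ∈ I, p i ≤ 1)
    (k : ℕ) : pbTail I p' k ≤ pbTail I p k := by
  induction I using Finset.induction_on generalizing k with
  | empty =>
    apply le_of_eq
    unfold pbTail
    apply Finset.sum_congr rfl
    intro S hS
    have : S = ∅ := by
      have := (Finset.mem_filter.mp hS).1
      simpa [Finset.powerset_empty] using this
    subst this
    simp [pbWeight]
  | insert _ _ ha =>
    rename_i a s ih
    have hp'0s : ∀ i ∈ s, 0 ≤ p' i := fun i hi => hp'0 i (Finset.mem_insert_of_mem hi)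
    have hles : ∀ i ∈ s, p' i ≤ p i := fun i hi => hle i (Finset.mem_insert_of_mem hi)
    have hp1s : ∀ i ∈ s, p i ≤ 1 := fun i hi => hp1 i (Finset.mem_insert_of_mem hi)
    have hps : ∀ i ∈ s, 0 ≤ p i ∧ p i ≤ 1 := fun i hi =>
      ⟨le_trans (hp'0s i hi) (hles i hi), hp1s i hi⟩
    rw [pbTail_insert ha, pbTail_insert ha]
    have hBA : pbTail s p k ≤ pbTail s p (k - 1) := pbTail_anti hps (Nat.sub_le k 1)
    have hA : pbTail s p' (k - 1) ≤ pbTail s p (k - 1) := ih hp'0s hles hp1s (k - 1)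
    have hB : pbTail s p' k ≤ pbTail s p k := ih hp'0s hles hp1s k
    have h0 : 0 ≤ p' a := hp'0 a (Finset.mem_insert_self a s)
    have h1 : p' a ≤ p a := hle a (Finset.mem_insert_self a s)
    have h2 : p a ≤ 1 := hp1 a (Finset.mem_insert_self a s)
    nlinarith [mul_nonneg h0 (sub_nonneg.mpr hA),
      mul_nonneg (by linarith : (0:ℝ) ≤ 1 - p' a) (sub_nonneg.mpr hB),
      mul_nonneg (sub_nonneg.mpr h1) (sub_nonneg.mpr hBA)]

lemma pbTail_const {α : Type*} [DecidableEq α] (I : Finset α) (q : ℝ) (k : ℕ) :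
    pbTail I (fun _ => q) k
      = ∑ j ∈ Finset.Icc k I.card, (I.card.choose j : ℝ) * q ^ j * (1 - q) ^ (I.card - j) := by
  unfold pbTail
  have hset : I.powerset.filter (fun S => k ≤ S.card)
      = (Finset.Icc k I.card).biUnion (fun j => I.powersetCard j) := by
    ext S
    simp only [Finset.mem_filter, Finset.mem_powerset, Finset.mem_biUnion, Finset.mem_Icc,
      Finset.mem_powersetCard]
    constructor
    · rintro ⟨hSI, hk⟩
      exact ⟨S.card, ⟨hk, Finset.card_le_card hSI⟩, hSI, rfl⟩
    · rintro ⟨j, ⟨hkj, _⟩, hSI, rfl⟩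
      exact ⟨hSI, hkj⟩
  rw [hset, Finset.sum_biUnion]
  · apply Finset.sum_congr rfl
    intro j hj
    have : ∀ S ∈ I.powersetCard j, pbWeight I (fun _ => q) S = q ^ j * (1 - q) ^ (I.card - j) := by
      intro S hS
      obtain ⟨hSI, hcard⟩ := Finset.mem_powersetCard.mp hS
      unfold pbWeight
      rw [Finset.prod_const, Finset.prod_const, hcard, Finset.card_sdiff_of_subset hSI, hcard]
    rw [Finset.sum_congr rfl this, Finset.sum_const, Finset.card_powersetCard]
    rw [nsmul_eq_mul]
    ring
  · intro i hi j hj hij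
    simp only [Function.onFun]
    rw [Finset.disjoint_left]
    intro S hSi hSj
    exact hij (((Finset.mem_powersetCard.mp hSi).2.symm.trans
      (Finset.mem_powersetCard.mp hSj).2))

/-- The binomial-tail lower bound of Equation (7): the binomial tail at the minimum
incident edge probability lower-bounds the `k`-probability. -/
theorem pbTail_ge_binomial_tail {α : Type*} [DecidableEq α] (I : Finset α) (p : α → ℝ)
    (hp : ∀ i ∈ I, 0 ≤ p i ∧ p i ≤ 1) (d : ℕ) (hd : I.card = d)
    (q : ℝ) (hq0 : 0 ≤ q) (hq1 : q ≤ 1) (hqle : ∀ i ∈ I, q ≤ p i)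
    (k : ℕ) (hk : k ≤ d) :
    pbTail I p k ≥ ∑ j ∈ Finset.Icc k d, (d.choose j : ℝ) * q ^ j * (1 - q) ^ (d - j) := by
  have hmono := pbTail_mono I p (fun _ => q) (fun i _ => hq0) hqle (fun i hi => (hp i hi).2) k
  have hconst := pbTail_const I q k
  rw [hd] at hconst
  rw [← hconst]
  exact hmono
end

section
/- Let G = (V, E, p) be an uncertain graph, k an integer, and η a real number. If vertex sets C₁ ⊆ V and C₂ ⊆ V both satisfy the (k, η)-constraint, then C₁ ∪ C₂ also satisfies the (k, η)-constraint. Consequently there exists a unique maximal vertex set satisfying the (k, η)-constraint, namely the union of all vertex sets satisfying it, and it contains every vertex set satisfying the constraint. -/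
open Finset

namespace CoreAux

variable {V : Type*} [DecidableEq V]

/-- Probability that at least `k` of the independent events indexed by `N` occur. -/
noncomputable def F (q : V → ℝ) (k : ℕ) (N : Finset V) : ℝ :=
  ∑ T ∈ N.powerset.filter (fun T => k ≤ T.card),
    (∏ v ∈ T, q v) * ∏ v ∈ N \ T, (1 - q v)

lemma F_zero (q : V → ℝ) (N : Finset V) : F q 0 N = 1 := by
  unfold F
  rw [Finset.filter_true_of_mem (fun _ _ => Nat.zero_le _), ← Finset.prod_add]
  simp

lemma F_insert (q : V → ℝ) (k : ℕ) (N : Finset V) {a : V} (ha : a ∉ N) :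
    F q (k + 1) (insert a N) = q a * F q k N + (1 - q a) * F q (k + 1) N := by
  unfold F
  rw [Finset.sum_filter, Finset.sum_filter, Finset.sum_filter,
    Finset.sum_powerset_insert ha, Finset.mul_sum, Finset.mul_sum, ← Finset.sum_add_distrib, ← Finset.sum_add_distrib]
  apply Finset.sum_congr rfl
  intro T hT
  rw [Finset.mem_powerset] at hT
  have haT : a ∉ T := fun h => ha (hT h)
  have haNT : a ∉ N \ T := fun h => ha (Finset.mem_sdiff.mp h).1
  have h1 : insert a N \ T = insert a (N \ T) := by
    ext x
    simp only [Finset.mem_sdiff, Finset.mem_insert]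
    constructor
    · rintro ⟨hx | hx, hx'⟩
      · exact Or.inl hx
      · exact Or.inr ⟨hx, hx'⟩
    · rintro (rfl | ⟨hx, hx'⟩)
      · exact ⟨Or.inl rfl, haT⟩
      · exact ⟨Or.inr hx, hx'⟩
  have h2 : insert a N \ insert a T = N \ T := by
    ext x
    simp only [Finset.mem_sdiff, Finset.mem_insert]
    constructor
    · rintro ⟨hx | hx, hx'⟩
      · exact absurd (Or.inl hx) hx'
      · exact ⟨hx, fun hxT => hx' (Or.inr hxT)⟩
    · rintro ⟨hx, hx'⟩
      refine ⟨Or.inr hx, ?_⟩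
      rintro (rfl | hxT)
      · exact ha hx
      · exact hx' hxT
  rw [h1, h2, Finset.prod_insert haNT, Finset.prod_insert haT,
    Finset.card_insert_of_notMem haT]
  have hiff : k + 1 ≤ T.card + 1 ↔ k ≤ T.card := by omega
  split_ifs <;> first | ring1 | (exfalso; omega)

lemma F_nonneg (q : V → ℝ) (k : ℕ) (N : Finset V)
    (hq : ∀ v ∈ N, 0 ≤ q v ∧ q v ≤ 1) : 0 ≤ F q k N := by
  unfold F
  apply Finset.sum_nonneg
  intro T hT
  rw [Finset.mem_filter, Finset.mem_powerset] at hT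
  apply mul_nonneg
  · exact Finset.prod_nonneg fun v hv => (hq v (hT.1 hv)).1
  · exact Finset.prod_nonneg fun v hv => by
      have := (hq v (Finset.mem_sdiff.mp hv).1).2; linarith

lemma F_succ_le (q : V → ℝ) (k : ℕ) (N : Finset V)
    (hq : ∀ v ∈ N, 0 ≤ q v ∧ q v ≤ 1) : F q (k + 1) N ≤ F q k N := by
  unfold F
  apply Finset.sum_le_sum_of_subset_of_nonneg
  · intro T hT
    rw [Finset.mem_filter] at hT ⊢
    exact ⟨hT.1, by omega⟩
  · intro T hT _
    rw [Finset.mem_filter, Finset.mem_powerset] at hT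
    apply mul_nonneg
    · exact Finset.prod_nonneg fun v hv => (hq v (hT.1 hv)).1
    · exact Finset.prod_nonneg fun v hv => by
        have := (hq v (Finset.mem_sdiff.mp hv).1).2; linarith

lemma F_le_insert (q : V → ℝ) (k : ℕ) (N : Finset V) {a : V} (ha : a ∉ N)
    (hqa : 0 ≤ q a ∧ q a ≤ 1) (hq : ∀ v ∈ N, 0 ≤ q v ∧ q v ≤ 1) :
    F q k N ≤ F q k (insert a N) := by
  cases k with
  | zero => rw [F_zero, F_zero]
  | succ m =>
    rw [F_insert q m N ha]
    have h1 : F q (m + 1) N ≤ F q m N := F_succ_le q m N hq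
    nlinarith [hqa.1, hqa.2]

lemma F_mono (q : V → ℝ) (k : ℕ) {N N' : Finset V} (hsub : N ⊆ N')
    (hq : ∀ v ∈ N', 0 ≤ q v ∧ q v ≤ 1) : F q k N ≤ F q k N' := by
  have key : ∀ s : Finset V, (∀ v ∈ s, 0 ≤ q v ∧ q v ≤ 1) →
      (∀ v ∈ N, 0 ≤ q v ∧ q v ≤ 1) → F q k N ≤ F q k (N ∪ s) := by
    intro s
    induction s using Finset.induction_on with
    | empty => intro _ _; rw [Finset.union_empty]
    | @insert a s ha ih =>
      intro hs hN
      have hs' : ∀ v ∈ s, 0 ≤ q v ∧ q v ≤ 1 := fun v hv => hs v (Finset.mem_insert_of_mem hv)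
      by_cases haNs : a ∈ N ∪ s
      · have : N ∪ insert a s = N ∪ s := by
          ext x; simp only [Finset.mem_union, Finset.mem_insert]
          constructor
          · rintro (hx | rfl | hx)
            · exact Or.inl hx
            · simpa using haNs
            · exact Or.inr hx
          · rintro (hx | hx)
            · exact Or.inl hx
            · exact Or.inr (Or.inr hx)
        rw [this]; exact ih hs' hN
      · have hstep : N ∪ insert a s = insert a (N ∪ s) := by
          ext x; simp only [Finset.mem_union, Finset.mem_insert]; tauto
        rw [hstep]
        refine le_trans (ih hs' hN) (F_le_insert q k (N ∪ s) haNs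
          (hs a (Finset.mem_insert_self a s)) ?_)
        intro v hv
        rcases Finset.mem_union.mp hv with hv | hv
        · exact hN v hv
        · exact hs' v hv
  have := key (N' \ N) (fun v hv => hq v (Finset.mem_sdiff.mp hv).1)
    (fun v hv => hq v (hsub hv))
  rwa [Finset.union_sdiff_of_subset hsub] at this

end CoreAux

lemma kProb_mono {V : Type*} [Fintype V] [DecidableEq V] (G : SimpleGraph V)
    [DecidableRel G.Adj] (p : V → V → ℝ) (hp : ∀ u v, G.Adj u v → 0 ≤ p u v ∧ p u v ≤ 1)
    (k : ℕ) {C D : Finset V} (hCD : C ⊆ D) (u : V) :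
    kProb G p k C u ≤ kProb G p k D u := by
  show CoreAux.F (fun v => p u v) k (C.filter (fun v => G.Adj u v)) ≤
    CoreAux.F (fun v => p u v) k (D.filter (fun v => G.Adj u v))
  apply CoreAux.F_mono
  · exact Finset.filter_subset_filter _ hCD
  · intro v hv
    exact hp u v (Finset.mem_filter.mp hv).2

/-- The family of vertex sets satisfying the `(k, η)`-constraint is closed under
unions; consequently there is a unique maximal vertex set satisfying the constraint,
which contains every vertex set satisfying it. -/
theorem core_constraint_union_and_unique_maximal {V : Type*} [Fintype V] [DecidableEq V]
    (G : SimpleGraph V) [DecidableRel G.Adj] (p : V → V → ℝ)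
    (hsymm : ∀ u v, p u v = p v u) (hp : ∀ u v, G.Adj u v → 0 ≤ p u v ∧ p u v ≤ 1)
    (k : ℕ) (η : ℝ) (C₁ C₂ : Finset V)
    (h₁ : ∀ u ∈ C₁, η ≤ kProb G p k C₁ u) (h₂ : ∀ u ∈ C₂, η ≤ kProb G p k C₂ u) :
    (∀ u ∈ C₁ ∪ C₂, η ≤ kProb G p k (C₁ ∪ C₂) u) ∧
      ∃! M : Finset V, (∀ u ∈ M, η ≤ kProb G p k M u) ∧
        ∀ C : Finset V, (∀ u ∈ C, η ≤ kProb G p k C u) → C ⊆ M := by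
  classical
  -- closure under binary unions, in general
  have union_closed : ∀ A B : Finset V, (∀ u ∈ A, η ≤ kProb G p k A u) →
      (∀ u ∈ B, η ≤ kProb G p k B u) → ∀ u ∈ A ∪ B, η ≤ kProb G p k (A ∪ B) u := by
    intro A B hA hB u hu
    rcases Finset.mem_union.mp hu with hu | hu
    · exact le_trans (hA u hu) (kProb_mono G p hp k Finset.subset_union_left u)
    · exact le_trans (hB u hu) (kProb_mono G p hp k Finset.subset_union_right u)
  refine ⟨union_closed C₁ C₂ h₁ h₂, ?_⟩
  set good : Finset V → Prop := fun C => ∀ u ∈ C, η ≤ kProb G p k C u with hgood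
  have sup_closed : ∀ s : Finset (Finset V), (∀ C ∈ s, good C) → good (s.sup id) := by
    intro s
    induction s using Finset.induction_on with
    | empty => intro _; simp [hgood]
    | @insert A s hA ih =>
      intro hs
      rw [Finset.sup_insert, id_eq, Finset.sup_eq_union]
      exact union_closed A (s.sup id) (hs A (Finset.mem_insert_self A s))
        (ih fun C hC => hs C (Finset.mem_insert_of_mem hC))
  set 𝒞 : Finset (Finset V) := Finset.univ.filter good with h𝒞
  refine ⟨𝒞.sup id, ⟨sup_closed 𝒞 fun C hC => (Finset.mem_filter.mp hC).2, ?_⟩, ?_⟩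
  · intro C hC
    have hmem : C ∈ 𝒞 := Finset.mem_filter.mpr ⟨Finset.mem_univ C, hC⟩
    exact Finset.le_sup (f := id) hmem
  · rintro M ⟨hMgood, hMmax⟩
    apply Finset.Subset.antisymm
    · have hmem : M ∈ 𝒞 := Finset.mem_filter.mpr ⟨Finset.mem_univ M, hMgood⟩
      exact Finset.le_sup (f := id) hmem
    · exact hMmax (𝒞.sup id) (sup_closed 𝒞 fun C hC => (Finset.mem_filter.mp hC).2)
end
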